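/- Let n ≥ 5 and x ∈ [0,1]^n. If T ⊆ {1,…,n−1} satisfies T ∩ (T+1) = ∅ (indices cyclic modulo n−1) and φ(T) = Φ*, then x_i + x_{i+1} + x_n ≤ 2 for all i ∈ T. -/

import Mathlib

open Finset

/-- Cyclic successor on the rim `{1, …, n-1}` of the wheel `W_{n-1}`. -/
def wsucc (n i : ℕ) : ℕ := if i = n - 1 then 1 else i + 1

/-- The dual bound `φ(T)`. -/
noncomputable def phiW (n : ℕ) (x : ℕ → ℝ) (T : Finset ℕ) : ℝ :=
  ∑ i ∈ Finset.Icc 1 (n - 1) \ T, max 0 (x i + x (wsucc n i) - 1) +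
  ∑ i ∈ Finset.Icc 1 (n - 1) \ (T ∪ T.image (wsucc n)), max 0 (x i + x n - 1) +
  ∑ i ∈ T, max 0 (x i + x (wsucc n i) + x n - 1)

/-- `Φ* = max{φ(T) : T ⊆ {1,…,n-1}, T ∩ (T+1) = ∅}`. -/
noncomputable def phiStarW (n : ℕ) (x : ℕ → ℝ) : ℝ :=
  ((Finset.Icc 1 (n - 1)).powerset.filter
      (fun T => T ∩ T.image (wsucc n) = ∅)).sup'
    ⟨∅, by simp⟩ (phiW n x)

lemma wsucc_mem {n i : ℕ} (hn : 5 ≤ n) (hi : i ∈ Finset.Icc 1 (n - 1)) :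
    wsucc n i ∈ Finset.Icc 1 (n - 1) := by
  simp only [Finset.mem_Icc] at *
  unfold wsucc
  split <;> omega

lemma wsucc_inj {n i j : ℕ} (hn : 5 ≤ n) (hi : i ∈ Finset.Icc 1 (n - 1))
    (hj : j ∈ Finset.Icc 1 (n - 1)) (h : wsucc n i = wsucc n j) : i = j := by
  simp only [Finset.mem_Icc] at *
  unfold wsucc at h
  split at h <;> split at h <;> omega

theorem optimal_T_bounded_above (n : ℕ) (hn : 5 ≤ n) (x : ℕ → ℝ)
    (hx : ∀ i ∈ Finset.Icc 1 n, 0 ≤ x i ∧ x i ≤ 1)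
    (T : Finset ℕ) (hT : T ⊆ Finset.Icc 1 (n - 1))
    (hdisj : T ∩ T.image (wsucc n) = ∅)
    (hopt : phiW n x T = phiStarW n x) :
    ∀ i ∈ T, x i + x (wsucc n i) + x n ≤ 2 := by
  intro i hiT
  by_contra hlt
  push_neg at hlt
  have hiI : i ∈ Finset.Icc 1 (n - 1) := hT hiT
  set s := wsucc n i with hs
  have hsI : s ∈ Finset.Icc 1 (n - 1) := wsucc_mem hn hiI
  have hiIcc : i ∈ Finset.Icc 1 n := by
    simp only [Finset.mem_Icc] at *; omega
  have hsIcc : s ∈ Finset.Icc 1 n := by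
    simp only [Finset.mem_Icc] at *; omega
  have hnIcc : n ∈ Finset.Icc 1 n := by
    simp only [Finset.mem_Icc]; omega
  obtain ⟨ha0, ha1⟩ := hx i hiIcc
  obtain ⟨hb0, hb1⟩ := hx s hsIcc
  obtain ⟨hc0, hc1⟩ := hx n hnIcc
  have hdisj' : ∀ a, a ∈ T → a ∈ T.image (wsucc n) → False := by
    intro a h1 h2
    exact (Finset.eq_empty_iff_forall_notMem.mp hdisj a) (Finset.mem_inter.mpr ⟨h1, h2⟩)
  have hsImg : s ∈ T.image (wsucc n) := Finset.mem_image.mpr ⟨i, hiT, rfl⟩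
  have hne : i ≠ s := fun h => hdisj' i hiT (h ▸ hsImg)
  have hiNimg : i ∉ T.image (wsucc n) := fun h => hdisj' i hiT h
  have hsNT : s ∉ T := fun h => hdisj' s h hsImg
  set T' := T.erase i with hT'def
  have hiNT' : i ∉ T' := Finset.notMem_erase i T
  have hT'sub : T' ⊆ Finset.Icc 1 (n - 1) := (Finset.erase_subset _ _).trans hT
  have hT'img : T'.image (wsucc n) ⊆ T.image (wsucc n) :=
    Finset.image_subset_image (Finset.erase_subset _ _)
  have hT'disj : T' ∩ T'.image (wsucc n) = ∅ := by
    rw [Finset.eq_empty_iff_forall_notMem]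
    intro a ha
    rw [Finset.mem_inter] at ha
    exact hdisj' a (Finset.erase_subset _ _ ha.1) (hT'img ha.2)
  have hle : phiW n x T' ≤ phiStarW n x := by
    apply Finset.le_sup'
    simp only [Finset.mem_filter, Finset.mem_powerset]
    exact ⟨hT'sub, hT'disj⟩
  -- facts about membership in T' and its image
  have hiNimg' : i ∉ T'.image (wsucc n) := fun h => hiNimg (hT'img h)
  have hsNT' : s ∉ T' := fun h => hsNT (Finset.erase_subset _ _ h)
  have hsNimg' : s ∉ T'.image (wsucc n) := by
    intro h
    obtain ⟨j, hj, hjs⟩ := Finset.mem_image.mp h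
    have : j = i := wsucc_inj hn (hT'sub hj) hiI (hjs.trans hs)
    exact hiNT' (this ▸ hj)
  have hTins : T = insert i T' := (Finset.insert_erase hiT).symm
  -- set identity for the first sum
  have hset1 : Finset.Icc 1 (n - 1) \ T' = insert i (Finset.Icc 1 (n - 1) \ T) := by
    rw [hT'def]
    exact Finset.sdiff_erase hiI
  -- set identity for the second sum
  have hA : T ∪ T.image (wsucc n) = insert i (insert s (T' ∪ T'.image (wsucc n))) := by
    rw [hTins, Finset.image_insert, ← hs]
    ext j
    simp only [Finset.mem_union, Finset.mem_insert]
    tauto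
  have hset2 : Finset.Icc 1 (n - 1) \ (T' ∪ T'.image (wsucc n)) =
      insert i (insert s (Finset.Icc 1 (n - 1) \ (T ∪ T.image (wsucc n)))) := by
    ext j
    simp only [Finset.mem_sdiff, Finset.mem_insert, hA, Finset.mem_union]
    constructor
    · rintro ⟨hj1, hj2⟩
      rcases eq_or_ne j i with rfl | h1
      · exact Or.inl rfl
      rcases eq_or_ne j s with rfl | h2
      · exact Or.inr (Or.inl rfl)
      · exact Or.inr (Or.inr ⟨hj1, by tauto⟩)
    · rintro (rfl | rfl | ⟨hj1, hj2⟩)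
      · exact ⟨hiI, by tauto⟩
      · exact ⟨hsI, by tauto⟩
      · exact ⟨hj1, by tauto⟩
  -- sum identities
  have e1 : ∑ j ∈ Finset.Icc 1 (n - 1) \ T', max 0 (x j + x (wsucc n j) - 1) =
      max 0 (x i + x s - 1) +
        ∑ j ∈ Finset.Icc 1 (n - 1) \ T, max 0 (x j + x (wsucc n j) - 1) := by
    rw [hset1, Finset.sum_insert (by simp [hiT]), ← hs]
  have e2 : ∑ j ∈ Finset.Icc 1 (n - 1) \ (T' ∪ T'.image (wsucc n)), max 0 (x j + x n - 1) =
      max 0 (x i + x n - 1) + (max 0 (x s + x n - 1) +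
        ∑ j ∈ Finset.Icc 1 (n - 1) \ (T ∪ T.image (wsucc n)), max 0 (x j + x n - 1)) := by
    rw [hset2, Finset.sum_insert, Finset.sum_insert]
    · simp only [Finset.mem_sdiff, not_and, not_not]
      intro _
      exact Finset.mem_union_right _ hsImg
    · simp only [Finset.mem_insert, Finset.mem_sdiff, not_or, not_and, not_not]
      exact ⟨hne, fun _ => Finset.mem_union_left _ hiT⟩
  have e3 : ∑ j ∈ T', max 0 (x j + x (wsucc n j) + x n - 1) +
      max 0 (x i + x s + x n - 1) = ∑ j ∈ T, max 0 (x j + x (wsucc n j) + x n - 1) := by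
    rw [hs]
    exact Finset.sum_erase_add T _ hiT
  have key : phiW n x T' = phiW n x T +
      (max 0 (x i + x s - 1) + max 0 (x i + x n - 1) + max 0 (x s + x n - 1)
        - max 0 (x i + x s + x n - 1)) := by
    unfold phiW
    rw [e1, e2, ← e3]
    ring
  have m1 : max 0 (x i + x s - 1) = x i + x s - 1 := max_eq_right (by linarith)
  have m2 : max 0 (x i + x n - 1) = x i + x n - 1 := max_eq_right (by linarith)
  have m3 : max 0 (x s + x n - 1) = x s + x n - 1 := max_eq_right (by linarith)
  have m4 : max 0 (x i + x s + x n - 1) = x i + x s + x n - 1 := max_eq_right (by linarith)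
  rw [m1, m2, m3, m4] at key
  linarith
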